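/- Let d = mJ with d odd, a, f ∈ ℓ²(Z_d), and fix j ∈ Z_J. Define y_ℓ = S_m(a^{*ℓ} * f) (the subsampled ℓ-th convolution power applied to f) and s_ℓ(j) = DFT_J(y_ℓ)(j). Let r_j be the number of distinct values among {DFT_d(a)(j + nJ) : n = 0,…,m−1}. Then for any K ≥ r_j with 2K ≤ L, the Hankel matrix H_K(j) = [s_{p+q}(j)]_{p,q=0}^{K−1} satisfies rank(H_K(j)) ≤ r_j. -/

import Mathlib

open Finset

/-- Normalized DFT on `Z_d`. -/
noncomputable def dft (d : ℕ) (z : ZMod d → ℂ) (k : ZMod d) : ℂ :=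
  (1 / d) * ∑ t ∈ Finset.range d,
    z t * Complex.exp (-2 * Real.pi * Complex.I * (k.val * t) / d)

/-- Circular convolution on `Z_d`. -/
noncomputable def cconv (d : ℕ) (a f : ZMod d → ℂ) (k : ZMod d) : ℂ :=
  ∑ t ∈ Finset.range d, a t * f (k - t)

/-- `K×K` Hankel matrix of a sequence. -/
noncomputable def hankel (K : ℕ) (s : ℕ → ℂ) : Matrix (Fin K) (Fin K) ℂ :=
  fun p q => s (p.val + q.val)

noncomputable def zetaC (d : ℕ) : ℂ := Complex.exp (2 * Real.pi * Complex.I / d)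

lemma zetaC_ne_zero (d : ℕ) : zetaC d ≠ 0 := Complex.exp_ne_zero _

lemma zetaC_pow_self {d : ℕ} (hd : d ≠ 0) : zetaC d ^ d = 1 :=
  (Complex.isPrimitiveRoot_exp d hd).pow_eq_one

lemma zetaC_zpow_eq_one_iff {d : ℕ} (hd : d ≠ 0) (n : ℤ) :
    zetaC d ^ n = 1 ↔ (d : ℤ) ∣ n :=
  (Complex.isPrimitiveRoot_exp d hd).zpow_eq_one_iff_dvd n

lemma exp_neg_eq_zetaC (d p q : ℕ) :
    Complex.exp (-2 * Real.pi * Complex.I * (p * q) / d) = zetaC d ^ (-((p * q : ℕ) : ℤ)) := by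
  rw [zpow_neg, zpow_natCast, zetaC, ← Complex.exp_nat_mul, ← Complex.exp_neg]
  congr 1
  push_cast
  ring

lemma sum_zetaC_zpow {d : ℕ} (hd : d ≠ 0) (n : ℤ) :
    ∑ t ∈ range d, (zetaC d ^ n) ^ t = if (d : ℤ) ∣ n then (d : ℂ) else 0 := by
  split_ifs with h
  · rw [(zetaC_zpow_eq_one_iff hd n).mpr h]; simp
  · have hne : zetaC d ^ n ≠ 1 := fun hc => h ((zetaC_zpow_eq_one_iff hd n).mp hc)
    rw [geom_sum_eq hne]
    have h1 : (zetaC d ^ n) ^ d = 1 := by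
      rw [← zpow_natCast, ← zpow_mul, mul_comm, zpow_mul, zpow_natCast, zetaC_pow_self hd,
        one_zpow]
    simp [h1]

lemma pow_mod_eq {d : ℕ} {ζ : ℂ} (h1 : ζ ^ d = 1) (a : ℕ) : ζ ^ a = ζ ^ (a % d) := by
  conv_lhs => rw [← Nat.div_add_mod a d]
  rw [pow_add, pow_mul, h1, one_pow, one_mul]

lemma dvd_sub_iff_eq {d : ℕ} {p q : ℕ} (hp : p < d) (hq : q < d) :
    (d : ℤ) ∣ ((p : ℤ) - q) ↔ p = q := by
  constructor
  · intro h
    have h2 : (q : ℤ) % d = (p : ℤ) % d := Int.modEq_iff_dvd.mpr h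
    rw [Int.emod_eq_of_lt (by positivity) (by exact_mod_cast hq),
      Int.emod_eq_of_lt (by positivity) (by exact_mod_cast hp)] at h2
    exact_mod_cast h2.symm
  · rintro rfl; simp

lemma zetaC_zpow_congr {d : ℕ} (hd : d ≠ 0) {A B : ℤ} (h : (d : ℤ) ∣ B - A) :
    zetaC d ^ A = zetaC d ^ B := by
  have h1 : zetaC d ^ (B - A) = 1 := (zetaC_zpow_eq_one_iff hd _).mpr h
  calc zetaC d ^ A = zetaC d ^ A * zetaC d ^ (B - A) := by rw [h1, mul_one]
    _ = zetaC d ^ B := by rw [← zpow_add₀ (zetaC_ne_zero d)]; ring_nf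

lemma mul_dft_eq {d : ℕ} (hd : d ≠ 0) (a : ZMod d → ℂ) {k : ℕ} (hk : k < d) :
    (d : ℂ) * dft d a ↑k = ∑ s ∈ range d, a ↑s * zetaC d ^ (-((k * s : ℕ) : ℤ)) := by
  have hdc : (d : ℂ) ≠ 0 := Nat.cast_ne_zero.mpr hd
  rw [dft, ZMod.val_natCast_of_lt hk]
  rw [← mul_assoc, mul_one_div, div_self hdc, one_mul]
  refine Finset.sum_congr rfl fun s _ => ?_
  rw [exp_neg_eq_zetaC]

lemma dft_inversion {d : ℕ} (hd : d ≠ 0) (f : ZMod d → ℂ) (t : ZMod d) :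
    f t = ∑ k ∈ range d, dft d f ↑k * zetaC d ^ (k * t.val) := by
  haveI : NeZero d := ⟨hd⟩
  have hdc : (d : ℂ) ≠ 0 := Nat.cast_ne_zero.mpr hd
  have step1 : ∀ k ∈ range d, dft d f ↑k * zetaC d ^ (k * t.val)
      = ∑ s ∈ range d, (1 / d) * f ↑s * (zetaC d ^ ((t.val : ℤ) - (s : ℤ))) ^ k := by
    intro k hk
    rw [dft, ZMod.val_natCast_of_lt (mem_range.mp hk), mul_assoc, Finset.sum_mul,
      Finset.mul_sum]
    refine Finset.sum_congr rfl fun s _ => ?_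
    rw [exp_neg_eq_zetaC]
    have h2 : zetaC d ^ (-((k * s : ℕ) : ℤ)) * zetaC d ^ (k * t.val)
        = (zetaC d ^ ((t.val : ℤ) - (s : ℤ))) ^ k := by
      rw [← zpow_natCast (zetaC d) (k * t.val), ← zpow_add₀ (zetaC_ne_zero d),
        ← zpow_natCast (zetaC d ^ ((t.val : ℤ) - (s : ℤ))) k, ← zpow_mul]
      congr 1
      push_cast
      ring
    rw [mul_assoc (f ↑s), h2]
    ring
  rw [Finset.sum_congr rfl step1, Finset.sum_comm]
  have step2 : ∀ s ∈ range d,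
      ∑ k ∈ range d, (1 / d) * f ↑s * (zetaC d ^ ((t.val : ℤ) - (s : ℤ))) ^ k
      = if t.val = s then f ↑s else 0 := by
    intro s hs
    rw [← Finset.mul_sum, sum_zetaC_zpow hd,
      if_congr (dvd_sub_iff_eq (ZMod.val_lt t) (mem_range.mp hs)) rfl rfl]
    split_ifs with h
    · field_simp
    · simp
  rw [Finset.sum_congr rfl step2, Finset.sum_ite_eq]
  simp [Finset.mem_range.mpr (ZMod.val_lt t), ZMod.natCast_val, ZMod.cast_id]

lemma iter_expand {d : ℕ} (hd : d ≠ 0) (a f : ZMod d → ℂ) :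
    ∀ (ℓ : ℕ) (t : ZMod d), (cconv d a)^[ℓ] f t
      = ∑ k ∈ range d, ((d : ℂ) * dft d a ↑k) ^ ℓ * dft d f ↑k * zetaC d ^ (k * t.val) := by
  haveI : NeZero d := ⟨hd⟩
  intro ℓ
  induction ℓ with
  | zero =>
    intro t
    simpa using dft_inversion hd f t
  | succ n ih =>
    intro t
    rw [Function.iterate_succ_apply']
    simp only [cconv]
    calc ∑ s ∈ range d, a ↑s * (cconv d a)^[n] f (t - ↑s)
        = ∑ s ∈ range d, ∑ k ∈ range d,
            ((d : ℂ) * dft d a ↑k) ^ n * dft d f ↑k * zetaC d ^ (k * t.val)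
              * (a ↑s * zetaC d ^ (-((k * s : ℕ) : ℤ))) := by
          refine Finset.sum_congr rfl fun s hs => ?_
          rw [ih, Finset.mul_sum]
          refine Finset.sum_congr rfl fun k hk => ?_
          have hz : zetaC d ^ (k * (t - ↑s).val)
              = zetaC d ^ (k * t.val) * zetaC d ^ (-((k * s : ℕ) : ℤ)) := by
            rw [← zpow_natCast (zetaC d) (k * (t - ↑s).val),
              ← zpow_natCast (zetaC d) (k * t.val), ← zpow_add₀ (zetaC_ne_zero d)]
            apply zetaC_zpow_congr hd
            have h0 : ((((t.val : ℤ) - (s : ℤ) - ((t - ↑s).val : ℤ)) : ℤ) : ZMod d) = 0 := by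
              push_cast
              simp only [ZMod.natCast_val, ZMod.cast_id]
              ring
            have h1 : (d : ℤ) ∣ ((t.val : ℤ) - (s : ℤ) - ((t - ↑s).val : ℤ)) :=
              (ZMod.intCast_zmod_eq_zero_iff_dvd _ d).mp h0
            have h2 : (d : ℤ) ∣ (k : ℤ) * ((t.val : ℤ) - (s : ℤ) - ((t - ↑s).val : ℤ)) :=
              Dvd.dvd.mul_left h1 (k : ℤ)
            convert h2 using 1
            push_cast
            ring
          rw [hz]
          ring
      _ = ∑ k ∈ range d,
            ((d : ℂ) * dft d a ↑k) ^ (n + 1) * dft d f ↑k * zetaC d ^ (k * t.val) := by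
          rw [Finset.sum_comm]
          refine Finset.sum_congr rfl fun k hk => ?_
          rw [← Finset.mul_sum, ← mul_dft_eq hd a (mem_range.mp hk)]
          ring

lemma zetaC_pow_factor (m J : ℕ) (hm : m ≠ 0) (hJ : J ≠ 0) : zetaC (m * J) ^ m = zetaC J := by
  rw [zetaC, zetaC, ← Complex.exp_nat_mul]
  congr 1
  have hmc : (m : ℂ) ≠ 0 := Nat.cast_ne_zero.mpr hm
  have hJc : (J : ℂ) ≠ 0 := Nat.cast_ne_zero.mpr hJ
  have hcast : ((m * J : ℕ) : ℂ) = (m : ℂ) * (J : ℂ) := by push_cast; ring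
  rw [hcast]
  field_simp

lemma dvd_iff_mod (J : ℕ) (hJ : J ≠ 0) {k jv : ℕ} (hjv : jv < J) :
    (J : ℤ) ∣ ((k : ℤ) - jv) ↔ k % J = jv := by
  constructor
  · intro h
    have h2 : (jv : ℤ) % J = (k : ℤ) % J := Int.modEq_iff_dvd.mpr h
    have h3 : ((jv % J : ℕ) : ℤ) = ((k % J : ℕ) : ℤ) := by push_cast; exact h2
    have h4 : jv % J = k % J := by exact_mod_cast h3
    rw [Nat.mod_eq_of_lt hjv] at h4
    exact h4.symm
  · intro h
    have h3 := Nat.div_add_mod k J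
    rw [h] at h3
    refine ⟨(k / J : ℕ), ?_⟩
    have h4 : (k : ℤ) = (J : ℤ) * ((k / J : ℕ) : ℤ) + jv := by exact_mod_cast h3.symm
    linarith

lemma sum_filter_mod (m J : ℕ) (hJ : J ≠ 0) {jv : ℕ} (hjv : jv < J) (g : ℕ → ℂ) :
    ∑ k ∈ range (m * J), (if k % J = jv then g k else 0) = ∑ n ∈ range m, g (jv + n * J) := by
  rw [← Finset.sum_filter]
  have hJp : 0 < J := Nat.pos_of_ne_zero hJ
  refine Finset.sum_nbij' (i := fun k => k / J) (j := fun n => jv + n * J) ?_ ?_ ?_ ?_ ?_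
  · intro k hk
    rw [Finset.mem_filter, Finset.mem_range] at hk
    exact Finset.mem_range.mpr ((Nat.div_lt_iff_lt_mul hJp).mpr hk.1)
  · intro n hn
    rw [Finset.mem_range] at hn
    rw [Finset.mem_filter, Finset.mem_range]
    constructor
    · calc jv + n * J < J + n * J := by omega
        _ = (n + 1) * J := by ring
        _ ≤ m * J := Nat.mul_le_mul_right J hn
    · rw [Nat.add_mul_mod_self_right, Nat.mod_eq_of_lt hjv]
  · intro k hk
    rw [Finset.mem_filter] at hk
    calc jv + k / J * J = k % J + J * (k / J) := by rw [hk.2, mul_comm]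
      _ = k := Nat.mod_add_div k J
  · intro n hn
    show (jv + n * J) / J = n
    rw [Nat.add_mul_div_right _ _ hJp, Nat.div_eq_of_lt hjv, zero_add]
  · intro k hk
    rw [Finset.mem_filter] at hk
    congr 1
    calc k = k % J + J * (k / J) := (Nat.mod_add_div k J).symm
      _ = jv + k / J * J := by rw [hk.2, mul_comm]

lemma s_eq (m J : ℕ) (hm : m ≠ 0) (hJ : J ≠ 0) (a f : ZMod (m * J) → ℂ) (j : ZMod J) (ℓ : ℕ) :
    dft J (fun j' : ZMod J => ((cconv (m * J) a)^[ℓ] f) ((m * j'.val : ℕ) : ZMod (m * J))) j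
      = ∑ n ∈ range m,
          dft (m * J) f ((j.val + n * J : ℕ) : ZMod (m * J))
            * (((m * J : ℕ) : ℂ) * dft (m * J) a ((j.val + n * J : ℕ) : ZMod (m * J))) ^ ℓ := by
  have hd : m * J ≠ 0 := Nat.mul_ne_zero hm hJ
  haveI : NeZero J := ⟨hJ⟩
  haveI : NeZero (m * J) := ⟨hd⟩
  have hJc : (J : ℂ) ≠ 0 := Nat.cast_ne_zero.mpr hJ
  have hjv : j.val < J := ZMod.val_lt j
  rw [dft]
  have step1 : ∀ t ∈ range J,
      ((cconv (m * J) a)^[ℓ] f) ((m * (↑t : ZMod J).val : ℕ) : ZMod (m * J)) *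
        Complex.exp (-2 * Real.pi * Complex.I * (j.val * t) / J)
      = ∑ k ∈ range (m * J), (((m * J : ℕ) : ℂ) * dft (m * J) a ↑k) ^ ℓ * dft (m * J) f ↑k *
          (zetaC J ^ ((k : ℤ) - (j.val : ℤ))) ^ t := by
    intro t ht
    rw [ZMod.val_natCast_of_lt (mem_range.mp ht), iter_expand hd a f ℓ, Finset.sum_mul]
    refine Finset.sum_congr rfl fun k hk => ?_
    have e1 : zetaC (m * J) ^ (k * ((m * t : ℕ) : ZMod (m * J)).val) = zetaC J ^ (k * t) := by
      rw [ZMod.val_natCast, pow_mod_eq (zetaC_pow_self hd)]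
      have hmod : (k * (m * t % (m * J))) % (m * J) = (k * (m * t)) % (m * J) :=
        Nat.ModEq.mul_left k (Nat.mod_modEq (m * t) (m * J))
      rw [hmod, ← pow_mod_eq (zetaC_pow_self hd)]
      have : k * (m * t) = m * (k * t) := by ring
      rw [this, pow_mul, zetaC_pow_factor m J hm hJ]
    rw [e1, exp_neg_eq_zetaC]
    have e2 : zetaC J ^ (k * t) * zetaC J ^ (-((j.val * t : ℕ) : ℤ))
        = (zetaC J ^ ((k : ℤ) - (j.val : ℤ))) ^ t := by
      rw [← zpow_natCast (zetaC J) (k * t), ← zpow_add₀ (zetaC_ne_zero J),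
        ← zpow_natCast (zetaC J ^ ((k : ℤ) - (j.val : ℤ))) t, ← zpow_mul]
      congr 1
      push_cast
      ring
    rw [mul_assoc, e2]
  rw [Finset.sum_congr rfl step1, Finset.sum_comm, Finset.mul_sum]
  have step2 : ∀ k ∈ range (m * J),
      (1 / (J : ℂ)) * ∑ t ∈ range J,
          (((m * J : ℕ) : ℂ) * dft (m * J) a ↑k) ^ ℓ * dft (m * J) f ↑k *
            (zetaC J ^ ((k : ℤ) - (j.val : ℤ))) ^ t
      = if k % J = j.val then
          dft (m * J) f ↑k * (((m * J : ℕ) : ℂ) * dft (m * J) a ↑k) ^ ℓ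
        else 0 := by
    intro k hk
    rw [← Finset.mul_sum, sum_zetaC_zpow hJ,
      if_congr (dvd_iff_mod J hJ hjv) rfl rfl]
    split_ifs with h
    · field_simp
    · simp
  rw [Finset.sum_congr rfl step2,
    sum_filter_mod m J hJ hjv
      (fun k => dft (m * J) f ↑k * (((m * J : ℕ) : ℂ) * dft (m * J) a ↑k) ^ ℓ)]

theorem rank_dynamical_hankel_le (m J : ℕ) (hodd : Odd (m * J))
    (a f : ZMod (m * J) → ℂ) (j : ZMod J) (K L : ℕ)
    (hK : (Finset.image (fun n => dft (m * J) a ((j.val + n * J : ℕ) : ZMod (m * J)))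
            (Finset.range m)).card ≤ K)
    (hL : 2 * K ≤ L) :
    (hankel K (fun ℓ =>
        dft J (fun j' : ZMod J =>
          ((cconv (m * J) a)^[ℓ] f) ((m * j'.val : ℕ) : ZMod (m * J))) j)).rank
      ≤ (Finset.image (fun n => dft (m * J) a ((j.val + n * J : ℕ) : ZMod (m * J)))
            (Finset.range m)).card := by
  have hd : m * J ≠ 0 := by
    rintro h
    rw [h] at hodd
    simp [Nat.odd_iff] at hodd
  have hm : m ≠ 0 := fun h => hd (by rw [h, zero_mul])
  have hJ : J ≠ 0 := fun h => hd (by rw [h, mul_zero])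
  set lam : ℕ → ℂ := fun n => dft (m * J) a ((j.val + n * J : ℕ) : ZMod (m * J)) with hlam
  set c : ℕ → ℂ := fun n => dft (m * J) f ((j.val + n * J : ℕ) : ZMod (m * J)) with hc
  set T : Finset ℂ := Finset.image lam (Finset.range m) with hT
  set coef : ℂ → ℂ := fun v => ∑ n ∈ (Finset.range m).filter (fun n => lam n = v), c n with hcoef
  have hgroup : ∀ ℓ : ℕ,
      ∑ n ∈ range m, c n * (((m * J : ℕ) : ℂ) * lam n) ^ ℓ
        = ∑ v ∈ T, coef v * (((m * J : ℕ) : ℂ) * v) ^ ℓ := by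
    intro ℓ
    have h1 : ∀ v ∈ T, coef v * (((m * J : ℕ) : ℂ) * v) ^ ℓ
        = ∑ n ∈ (Finset.range m).filter (fun n => lam n = v),
            c n * (((m * J : ℕ) : ℂ) * lam n) ^ ℓ := by
      intro v hv
      rw [hcoef, Finset.sum_mul]
      refine Finset.sum_congr rfl fun n hn => ?_
      rw [(Finset.mem_filter.mp hn).2]
    rw [Finset.sum_congr rfl h1, Finset.sum_fiberwise_eq_sum_filter]
    refine (Finset.sum_congr ?_ fun _ _ => rfl).symm
    exact Finset.filter_eq_self.mpr fun n hn => Finset.mem_image_of_mem lam hn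
  have hsval : ∀ ℓ : ℕ,
      dft J (fun j' : ZMod J =>
          ((cconv (m * J) a)^[ℓ] f) ((m * j'.val : ℕ) : ZMod (m * J))) j
        = ∑ v ∈ T, coef v * (((m * J : ℕ) : ℂ) * v) ^ ℓ := by
    intro ℓ
    rw [s_eq m J hm hJ a f j ℓ, ← hgroup]
  set V : Matrix (Fin K) {x // x ∈ T} ℂ := fun p v => (((m * J : ℕ) : ℂ) * v.1) ^ (p : ℕ) with hV
  set W : Matrix {x // x ∈ T} (Fin K) ℂ :=
    fun v q => coef v.1 * (((m * J : ℕ) : ℂ) * v.1) ^ (q : ℕ) with hW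
  have hH : hankel K (fun ℓ =>
        dft J (fun j' : ZMod J =>
          ((cconv (m * J) a)^[ℓ] f) ((m * j'.val : ℕ) : ZMod (m * J))) j) = V * W := by
    funext p q
    simp only [hankel, Matrix.mul_apply, hV, hW]
    rw [hsval (p.val + q.val), ← Finset.sum_coe_sort T]
    refine Finset.sum_congr rfl fun v _ => ?_
    rw [pow_add]
    ring
  rw [hH]
  calc (V * W).rank ≤ V.rank := Matrix.rank_mul_le_left V W
    _ ≤ Fintype.card {x // x ∈ T} := Matrix.rank_le_card_width V
    _ = T.card := Fintype.card_coe T
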